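/- Let y_1(t),…,y_l(t) be time-varying unit vectors in ℝ³ and define Q(t) := Σ_{i=1}^{l} π_{y_i(t)}. If there exist indices i ≠ j and ε₁ > 0 such that |y_i(t)ᵀ y_j(t)| ≤ 1 − ε₁ for all t ≥ 0 (i.e. two of the directions are uniformly non-collinear), then Q(t) is persistently exciting: there exist T > 0 and μ > 0 such that (1/T)∫_t^{t+T} Q(τ) dτ ≥ μ I₃ for all t ≥ 0. -/

import Mathlib

open Matrix MeasureTheory

noncomputable section

/-- Projector onto the plane orthogonal to the unit vector `y`: `π_y = I₃ - y yᵀ`. -/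
def proj (y : Fin 3 → ℝ) : Matrix (Fin 3) (Fin 3) ℝ := 1 - Matrix.vecMulVec y y

/-- A time-varying positive semidefinite matrix `Σ(t)` is persistently exciting with
constants `T, μ` if `(1/T) ∫_t^{t+T} Σ(τ) dτ ≥ μ I` for all `t ≥ 0`. -/
def IsPEWith {ι : Type*} [Fintype ι] [DecidableEq ι]
    (M : ℝ → Matrix ι ι ℝ) (T μ : ℝ) : Prop :=
  0 < T ∧ 0 < μ ∧
    ∀ t : ℝ, 0 ≤ t →
      ((T⁻¹ • Matrix.of fun i j => ∫ τ in t..(t + T), M τ i j) -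
        μ • (1 : Matrix ι ι ℝ)).PosSemidef

lemma cs3 (w x : Fin 3 → ℝ) : (w ⬝ᵥ x)^2 ≤ (w ⬝ᵥ w) * (x ⬝ᵥ x) := by
  simp only [dotProduct, Fin.sum_univ_three]
  nlinarith [sq_nonneg (w 0 * x 1 - w 1 * x 0), sq_nonneg (w 0 * x 2 - w 2 * x 0),
    sq_nonneg (w 1 * x 2 - w 2 * x 1)]

lemma dot_self_nonneg (x : Fin 3 → ℝ) : 0 ≤ x ⬝ᵥ x := by
  simp only [dotProduct, Fin.sum_univ_three]; nlinarith [sq_nonneg (x 0), sq_nonneg (x 1), sq_nonneg (x 2)]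

lemma quad_proj (a x : Fin 3 → ℝ) :
    x ⬝ᵥ (proj a *ᵥ x) = x ⬝ᵥ x - (a ⬝ᵥ x)^2 := by
  simp [proj, dotProduct, Matrix.mulVec, Matrix.sub_apply, Matrix.one_apply,
    Matrix.vecMulVec_apply, Fin.sum_univ_three]
  ring

lemma quad_proj_nonneg (a x : Fin 3 → ℝ) (ha : a ⬝ᵥ a = 1) :
    0 ≤ x ⬝ᵥ (proj a *ᵥ x) := by
  rw [quad_proj]
  have := cs3 a x
  rw [ha, one_mul] at this
  linarith

lemma key (a b x : Fin 3 → ℝ) (ha : a ⬝ᵥ a = 1) (hb : b ⬝ᵥ b = 1) {ε : ℝ}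
    (hc : |a ⬝ᵥ b| ≤ 1 - ε) :
    ε * (x ⬝ᵥ x) ≤ x ⬝ᵥ (proj a *ᵥ x) + x ⬝ᵥ (proj b *ᵥ x) := by
  set s := a ⬝ᵥ x with hs
  set u := b ⬝ᵥ x with hu
  set c := a ⬝ᵥ b with hcdef
  set X := x ⬝ᵥ x with hX
  have hX0 : 0 ≤ X := dot_self_nonneg x
  have hsu : s^2 + u^2 ≤ (1 + |c|) * X := by
    set w : Fin 3 → ℝ := s • a + u • b with hw
    have hw1 : w ⬝ᵥ x = s^2 + u^2 := by
      rw [hw, add_dotProduct, smul_dotProduct, smul_dotProduct, ← hs, ← hu]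
      simp [smul_eq_mul]; ring
    have hw2 : w ⬝ᵥ w = s^2 + 2*s*u*c + u^2 := by
      rw [hw]
      simp only [add_dotProduct, dotProduct_add, smul_dotProduct,
        dotProduct_smul, smul_eq_mul, ha, hb, ← hcdef, dotProduct_comm b a, ← hcdef]
      ring
    have hcs := cs3 w x
    rw [hw1, hw2] at hcs
    have h2 : 2*s*u*c ≤ |c| * (s^2 + u^2) := by
      calc 2*s*u*c ≤ |2*s*u*c| := le_abs_self _
        _ = 2 * |s| * |u| * |c| := by rw [abs_mul, abs_mul, abs_mul]; norm_num
        _ ≤ |c| * (s^2 + u^2) := by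
            nlinarith [sq_nonneg (|s| - |u|), sq_abs s, sq_abs u, abs_nonneg c]
    rw [← hX] at hcs
    rcases eq_or_lt_of_le (by positivity : (0:ℝ) ≤ s^2 + u^2) with h0 | h0
    · have : (0:ℝ) ≤ (1 + |c|) * X := mul_nonneg (by positivity) hX0
      linarith
    · exact le_of_mul_le_mul_right (by nlinarith) h0
  have hqa := quad_proj a x
  have hqb := quad_proj b x
  have hc0 : 0 ≤ |c| := abs_nonneg c
  rw [hqa, hqb, ← hs, ← hu, ← hX]
  nlinarith [mul_nonneg hX0 (by linarith [abs_nonneg c] : (0:ℝ) ≤ 1 - |c| - ε)]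


lemma quad_sum {n : ℕ} (M : Fin n → Matrix (Fin 3) (Fin 3) ℝ) (x : Fin 3 → ℝ) :
    x ⬝ᵥ ((∑ k, M k) *ᵥ x) = ∑ k, x ⬝ᵥ (M k *ᵥ x) := by
  have : ∀ s : Finset (Fin n), x ⬝ᵥ ((∑ k ∈ s, M k) *ᵥ x) = ∑ k ∈ s, x ⬝ᵥ (M k *ᵥ x) := by
    intro s
    induction s using Finset.induction with
    | empty => simp
    | insert _ _ h ih =>
        rw [Finset.sum_insert h, Finset.sum_insert h, Matrix.add_mulVec,
          dotProduct_add, ih]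
  exact this Finset.univ

set_option maxHeartbeats 2000000 in
/-- if two of the time-varying unit directions `y i`, `y j` (`i ≠ j`) are
uniformly non-collinear, i.e. `|y_i(t)ᵀ y_j(t)| ≤ 1 - ε₁` for all `t ≥ 0`, then
`Q(t) = Σ_i π_{y_i(t)}` is persistently exciting. -/
theorem stmt1 (l : ℕ) (y : Fin l → ℝ → (Fin 3 → ℝ))
    (hunit : ∀ i t, y i t ⬝ᵥ y i t = 1)
    (hmeas : ∀ i, Measurable fun t => y i t)
    (hnoncol : ∃ i j : Fin l, i ≠ j ∧ ∃ ε₁ : ℝ, 0 < ε₁ ∧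
      ∀ t : ℝ, 0 ≤ t → |y i t ⬝ᵥ y j t| ≤ 1 - ε₁) :
    ∃ T μ : ℝ, IsPEWith (fun t => ∑ i, proj (y i t)) T μ := by
  obtain ⟨i, j, hij, ε, hε, hcol⟩ := hnoncol
  refine ⟨1, ε, one_pos, hε, ?_⟩
  intro t ht
  set Q : ℝ → Matrix (Fin 3) (Fin 3) ℝ := fun τ => ∑ k, proj (y k τ) with hQ
  -- components of unit vectors are bounded by 1
  have hyb : ∀ (k : Fin l) (τ : ℝ) (a : Fin 3), |y k τ a| ≤ 1 := by
    intro k τ a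
    have h1 := hunit k τ
    rw [dotProduct] at h1
    have h2 : y k τ a * y k τ a ≤ 1 := by
      rw [← h1]
      exact Finset.single_le_sum (f := fun b => y k τ b * y k τ b)
        (fun b _ => mul_self_nonneg _) (Finset.mem_univ a)
    rw [abs_le]; constructor <;> nlinarith
  -- entrywise description of Q
  have hQentry : ∀ (τ : ℝ) (a b : Fin 3),
      Q τ a b = ∑ k, ((if a = b then (1:ℝ) else 0) - y k τ a * y k τ b) := by
    intro τ a b
    show (∑ k, proj (y k τ)) a b = _
    rw [Matrix.sum_apply]
    exact Finset.sum_congr rfl fun k _ => by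
      simp [proj, Matrix.sub_apply, Matrix.one_apply, Matrix.vecMulVec_apply]
  -- measurability of entries
  have hmQ : ∀ a b : Fin 3, Measurable fun τ => Q τ a b := by
    intro a b
    have : (fun τ => Q τ a b)
        = fun τ => ∑ k, ((if a = b then (1:ℝ) else 0) - y k τ a * y k τ b) := by
      funext τ; exact hQentry τ a b
    rw [this]
    exact Finset.measurable_sum _ fun k _ =>
      (measurable_const.sub (((measurable_pi_apply a).comp (hmeas k)).mul
        ((measurable_pi_apply b).comp (hmeas k))))
  -- integrability of entries
  have hint : ∀ a b : Fin 3, IntervalIntegrable (fun τ => Q τ a b) volume t (t + 1) := by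
    intro a b
    rw [intervalIntegrable_iff]
    apply MeasureTheory.Measure.integrableOn_of_bounded (M := (l : ℝ) * 2)
    · exact ne_of_lt (by rw [Set.uIoc]; exact measure_Ioc_lt_top)
    · exact ((hmQ a b).aestronglyMeasurable)
    · filter_upwards with τ
      rw [Real.norm_eq_abs, hQentry τ a b]
      calc |∑ k, ((if a = b then (1:ℝ) else 0) - y k τ a * y k τ b)|
          ≤ ∑ k, |((if a = b then (1:ℝ) else 0) - y k τ a * y k τ b)| :=
            Finset.abs_sum_le_sum_abs _ _
        _ ≤ ∑ _k : Fin l, (2:ℝ) := by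
            apply Finset.sum_le_sum
            intro k _
            have h1 : |(if a = b then (1:ℝ) else 0)| ≤ 1 := by split <;> simp
            have h2 : |y k τ a * y k τ b| ≤ 1 := by
              rw [abs_mul]
              exact mul_le_one₀ (hyb k τ a) (abs_nonneg _) (hyb k τ b)
            calc |(if a = b then (1:ℝ) else 0) - y k τ a * y k τ b|
                ≤ |(if a = b then (1:ℝ) else 0)| + |y k τ a * y k τ b| := abs_sub _ _
              _ ≤ 2 := by linarith
        _ = (l : ℝ) * 2 := by simp [mul_comm]
  -- integrability of the quadratic form
  have hquad_eq : ∀ (x : Fin 3 → ℝ) (τ : ℝ),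
      x ⬝ᵥ (Q τ *ᵥ x) = ∑ a : Fin 3, ∑ b : Fin 3, x a * Q τ a b * x b := by
    intro x τ
    simp [dotProduct, Matrix.mulVec, Finset.mul_sum, mul_assoc]
  rw [Matrix.posSemidef_iff_dotProduct_mulVec]
  constructor
  · -- Hermitian
    have hsym : ∀ (τ : ℝ) (a b : Fin 3), Q τ b a = Q τ a b := by
      intro τ a b
      rw [hQentry, hQentry]
      refine Finset.sum_congr rfl fun k _ => ?_
      by_cases h : a = b
      · subst h; ring_nf
      · rw [if_neg h, if_neg fun hh => h hh.symm, mul_comm]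
    show _ = _
    ext a b
    simp only [Matrix.conjTranspose_apply, Matrix.sub_apply, Matrix.smul_apply,
      Matrix.of_apply, Matrix.one_apply, smul_eq_mul, star_trivial]
    have h1 : (∫ τ in t..(t + 1), Q τ b a) = ∫ τ in t..(t + 1), Q τ a b := by
      simp only [hsym]
    rw [h1]
    by_cases h : a = b
    · rw [h]
    · rw [if_neg h, if_neg fun hh => h hh.symm]
  · intro x
    rw [star_trivial]
    set g : Fin 3 → Fin 3 → ℝ → ℝ := fun a b τ => x a * Q τ a b * x b with hg
    have hintg : ∀ a b : Fin 3, IntervalIntegrable (g a b) volume t (t + 1) :=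
      fun a b => ((hint a b).const_mul _).mul_const _
    have hintG : ∀ a : Fin 3,
        IntervalIntegrable (fun τ => ∑ b : Fin 3, g a b τ) volume t (t + 1) :=
      fun a => IntervalIntegrable.sum (f := fun b => g a b) Finset.univ (fun b _ => hintg a b)
    have hintq : IntervalIntegrable (fun τ => x ⬝ᵥ (Q τ *ᵥ x)) volume t (t + 1) := by
      have he : (fun τ => x ⬝ᵥ (Q τ *ᵥ x))
          = fun τ => ∑ a : Fin 3, ∑ b : Fin 3, g a b τ := by
        funext τ; exact hquad_eq x τ
      rw [he]
      exact IntervalIntegrable.sum (f := fun a τ => ∑ b : Fin 3, g a b τ) Finset.univ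
        (fun a _ => hintG a)
    have hA : x ⬝ᵥ ((Matrix.of fun a b => ∫ τ in t..(t + 1), Q τ a b) *ᵥ x)
        = ∫ τ in t..(t + 1), x ⬝ᵥ (Q τ *ᵥ x) := by
      calc x ⬝ᵥ ((Matrix.of fun a b => ∫ τ in t..(t + 1), Q τ a b) *ᵥ x)
          = ∑ a : Fin 3, ∑ b : Fin 3, x a * (∫ τ in t..(t + 1), Q τ a b) * x b := by
            simp [dotProduct, Matrix.mulVec, Finset.mul_sum, mul_assoc]
        _ = ∑ a : Fin 3, ∑ b : Fin 3, ∫ τ in t..(t + 1), g a b τ := by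
            refine Finset.sum_congr rfl fun a _ => Finset.sum_congr rfl fun b _ => ?_
            rw [← intervalIntegral.integral_const_mul, ← intervalIntegral.integral_mul_const]
        _ = ∑ a : Fin 3, ∫ τ in t..(t + 1), ∑ b : Fin 3, g a b τ :=
            Finset.sum_congr rfl fun a _ =>
              (intervalIntegral.integral_finset_sum (f := fun b => g a b)
                (fun b _ => hintg a b)).symm
        _ = ∫ τ in t..(t + 1), ∑ a : Fin 3, ∑ b : Fin 3, g a b τ :=
            (intervalIntegral.integral_finset_sum (f := fun a τ => ∑ b : Fin 3, g a b τ)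
              (fun a _ => hintG a)).symm
        _ = ∫ τ in t..(t + 1), x ⬝ᵥ (Q τ *ᵥ x) :=
            intervalIntegral.integral_congr fun τ _ => (hquad_eq x τ).symm
    have hpt : ∀ τ ∈ Set.Icc t (t + 1), ε * (x ⬝ᵥ x) ≤ x ⬝ᵥ (Q τ *ᵥ x) := by
      intro τ hτ
      have hτ0 : (0 : ℝ) ≤ τ := le_trans ht hτ.1
      have hkey := key (y i τ) (y j τ) x (hunit i τ) (hunit j τ) (hcol τ hτ0)
      have hsum : x ⬝ᵥ (Q τ *ᵥ x) = ∑ k, x ⬝ᵥ (proj (y k τ) *ᵥ x) := quad_sum _ x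
      have hpair : x ⬝ᵥ (proj (y i τ) *ᵥ x) + x ⬝ᵥ (proj (y j τ) *ᵥ x)
          ≤ ∑ k, x ⬝ᵥ (proj (y k τ) *ᵥ x) := by
        have h2 : ∑ k ∈ ({i, j} : Finset (Fin l)), x ⬝ᵥ (proj (y k τ) *ᵥ x)
            ≤ ∑ k, x ⬝ᵥ (proj (y k τ) *ᵥ x) :=
          Finset.sum_le_sum_of_subset_of_nonneg (Finset.subset_univ _)
            (fun k _ _ => quad_proj_nonneg _ _ (hunit k τ))
        rwa [Finset.sum_pair hij] at h2
      rw [hsum]; linarith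
    have hle : (∫ _ in t..(t + 1), ε * (x ⬝ᵥ x)) ≤ ∫ τ in t..(t + 1), x ⬝ᵥ (Q τ *ᵥ x) :=
      intervalIntegral.integral_mono_on (by linarith) intervalIntegrable_const hintq hpt
    rw [intervalIntegral.integral_const] at hle
    simp only [add_sub_cancel_left, one_smul] at hle
    rw [Matrix.sub_mulVec, dotProduct_sub, Matrix.smul_mulVec,
      Matrix.smul_mulVec, Matrix.one_mulVec, dotProduct_smul,
      dotProduct_smul]
    simp only [inv_one, one_smul, smul_eq_mul]
    rw [hA]
    have hXnn := dot_self_nonneg x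
    linarith
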